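/- arXiv:1507.02018 — 3 statements merged into one kernel-verified Lean document; each statement's English description precedes it below -/
import Mathlib

section
/- Let X be an n×p real matrix and λ ≥ 0. Then the infimum of (1/n)‖X(I − G)‖_F² + λ‖G‖₁ over all p×p matrices G compatible with a DAG equals the infimum of (1/n)‖X(I − P T Pᵀ)‖_F² + λ‖T‖₁ over all pairs (P, T) with P a p×p permutation matrix and T a p×p strictly lower triangular matrix. -/
open Matrix BigOperators

/-- Entrywise Frobenius norm of a real matrix. -/
noncomputable def frob {n p : ℕ} (A : Matrix (Fin n) (Fin p) ℝ) : ℝ :=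
  Real.sqrt (∑ i, ∑ j, (A i j) ^ 2)

/-- Entrywise ℓ1 norm of a real matrix. -/
noncomputable def l1 {n p : ℕ} (A : Matrix (Fin n) (Fin p) ℝ) : ℝ :=
  ∑ i, ∑ j, |A i j|

/-- `P` is a permutation matrix. -/
def IsPermMatrix {p : ℕ} (P : Matrix (Fin p) (Fin p) ℝ) : Prop :=
  ∃ σ : Equiv.Perm (Fin p), ∀ i j, P i j = if i = σ j then 1 else 0

/-- `T` is strictly lower triangular. -/
def StrictLowerTri {p : ℕ} (T : Matrix (Fin p) (Fin p) ℝ) : Prop :=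
  ∀ i j : Fin p, i ≤ j → T i j = 0

/-- The directed graph with an edge `i → j` whenever `G i j ≠ 0` is acyclic
(no directed cycle, self-loops included). -/
def AcyclicMatrix {p : ℕ} (G : Matrix (Fin p) (Fin p) ℝ) : Prop :=
  ∀ i : Fin p, ¬ Relation.TransGen (fun a b : Fin p => G a b ≠ 0) i i

/-- Wrapper type with no pre-existing order instances. -/
structure MyWrap (p : ℕ) where
  val : Fin p

def myWrapEquiv (p : ℕ) : MyWrap p ≃ Fin p :=
  ⟨MyWrap.val, MyWrap.mk, fun ⟨_⟩ => rfl, fun _ => rfl⟩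

noncomputable instance (p : ℕ) : Fintype (MyWrap p) :=
  Fintype.ofEquiv _ (myWrapEquiv p).symm

/-- Topological sort of an acyclic relation on `Fin p`. -/
lemma exists_topo {p : ℕ} (edge : Fin p → Fin p → Prop)
    (h : ∀ i, ¬ Relation.TransGen edge i i) :
    ∃ σ : Equiv.Perm (Fin p), ∀ a b, edge a b → σ.symm b < σ.symm a := by
  classical
  set le : MyWrap p → MyWrap p → Prop :=
    fun x y => x = y ∨ Relation.TransGen edge y.val x.val with hle
  haveI : IsPartialOrder (MyWrap p) le :=
    { refl := fun x => Or.inl rfl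
      trans := by
        intro a b c hab hbc
        rcases hab with rfl | hab
        · exact hbc
        · rcases hbc with rfl | hbc
          · exact Or.inr hab
          · exact Or.inr (hbc.trans hab)
      antisymm := by
        intro a b hab hba
        rcases hab with rfl | hab
        · rfl
        · rcases hba with rfl | hba
          · rfl
          · exact absurd (hab.trans hba) (h b.val) }
  obtain ⟨s, hs, hles⟩ := extend_partialOrder le
  letI : LinearOrder (MyWrap p) :=
    { le := s
      lt := fun a b => s a b ∧ ¬ s b a
      le_refl := hs.refl
      le_trans := fun a b c => hs.trans a b c
      le_antisymm := fun a b => hs.antisymm a b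
      le_total := fun a b => hs.total a b
      lt_iff_le_not_ge := fun _ _ => Iff.rfl
      toDecidableLE := Classical.decRel s }
  have hcard : Fintype.card (MyWrap p) = p := by
    rw [Fintype.card_congr (myWrapEquiv p), Fintype.card_fin]
  let e := monoEquivOfFin (MyWrap p) hcard
  refine ⟨((myWrapEquiv p).symm.trans e.symm.toEquiv).symm, ?_⟩
  intro a b hab
  have hne : a ≠ b := by
    rintro rfl; exact h a (Relation.TransGen.single hab)
  have hlt : (⟨b⟩ : MyWrap p) < ⟨a⟩ := by
    refine lt_of_le_of_ne ?_ ?_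
    · exact hles _ _ (Or.inr (Relation.TransGen.single hab))
    · intro hh; exact hne (congrArg MyWrap.val hh).symm
  have := e.symm.strictMono hlt
  simp at this ⊢; exact this

lemma conj_apply {p : ℕ} (σ : Equiv.Perm (Fin p)) (P A : Matrix (Fin p) (Fin p) ℝ)
    (hP : ∀ i j, P i j = if i = σ j then 1 else 0) (i j : Fin p) :
    (P * A * Pᵀ) i j = A (σ.symm i) (σ.symm j) := by
  have h1 : ∀ k, (P * A) i k = A (σ.symm i) k := by
    intro k
    rw [Matrix.mul_apply]
    rw [Finset.sum_eq_single (σ.symm i)]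
    · simp [hP]
    · intro b _ hb; rw [hP]; rw [if_neg, zero_mul]
      intro h; exact hb (by rw [h, Equiv.symm_apply_apply])
    · simp
  rw [Matrix.mul_apply]
  rw [Finset.sum_eq_single (σ.symm j)]
  · rw [h1, Matrix.transpose_apply, hP]; simp
  · intro b _ hb; rw [Matrix.transpose_apply, hP]; rw [if_neg, mul_zero]
    intro h; exact hb (by rw [h, Equiv.symm_apply_apply])
  · simp

lemma l1_reindex {p n : ℕ} (σ : Equiv.Perm (Fin p)) (A : Matrix (Fin p) (Fin p) ℝ) :
    l1 (fun i j => A (σ i) (σ j)) = l1 A := by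
  unfold l1
  rw [Fintype.sum_equiv σ _ (fun i => ∑ j, |A i j|)]
  intro x
  exact Fintype.sum_equiv σ _ _ (fun y => rfl)

theorem stmt_3 {n p : ℕ} (X : Matrix (Fin n) (Fin p) ℝ) (lam : ℝ) (hlam : 0 ≤ lam) :
    sInf {v : ℝ | ∃ G : Matrix (Fin p) (Fin p) ℝ, AcyclicMatrix G ∧
        v = (1 / (n : ℝ)) * (frob (X * (1 - G))) ^ 2 + lam * l1 G} =
    sInf {v : ℝ | ∃ P T : Matrix (Fin p) (Fin p) ℝ,
        IsPermMatrix P ∧ StrictLowerTri T ∧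
        v = (1 / (n : ℝ)) * (frob (X * (1 - P * T * Pᵀ))) ^ 2 + lam * l1 T} := by
  congr 1
  ext v
  simp only [Set.mem_setOf_eq]
  constructor
  · rintro ⟨G, hG, rfl⟩
    obtain ⟨σ, hσ⟩ := exists_topo (fun a b => G a b ≠ 0) hG
    set P : Matrix (Fin p) (Fin p) ℝ := fun i j => if i = σ j then 1 else 0 with hPdef
    have hP : ∀ i j, P i j = if i = σ j then 1 else 0 := fun i j => rfl
    set T : Matrix (Fin p) (Fin p) ℝ := fun i j => G (σ i) (σ j) with hTdef
    have hGeq : G = P * T * Pᵀ := by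
      ext i j
      rw [conj_apply σ P T hP]
      simp [hTdef]
    refine ⟨P, T, ⟨σ, hP⟩, ?_, ?_⟩
    · intro i j hij
      by_contra hne
      have := hσ (σ i) (σ j) hne
      simp only [Equiv.symm_apply_apply] at this
      exact absurd hij (not_le_of_gt this)
    · rw [← hGeq]
      congr 1
      congr 1
      have : l1 T = l1 G := l1_reindex (n := n) σ G
      rw [this]
  · rintro ⟨P, T, ⟨σ, hP⟩, hT, rfl⟩
    refine ⟨P * T * Pᵀ, ?_, ?_⟩
    · intro i hi
      have hmono : ∀ a b : Fin p, (P * T * Pᵀ) a b ≠ 0 → σ.symm b < σ.symm a := by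
        intro a b hab
        rw [conj_apply σ P T hP] at hab
        by_contra hle
        exact hab (hT _ _ (le_of_not_gt hle))
      have htrans : Transitive (fun a b : Fin p => σ.symm b < σ.symm a) :=
        fun a b c hab hbc => lt_trans hbc hab
      have := Relation.TransGen.mono hmono i i hi
      rw [@Relation.transGen_eq_self _ (fun a b : Fin p => σ.symm b < σ.symm a) ⟨fun _ _ _ h1 h2 => htrans h1 h2⟩] at this
      exact lt_irrefl _ this
    · congr 1
      congr 1
      have : l1 (fun i j => T (σ.symm i) (σ.symm j)) = l1 T := l1_reindex (n := n) σ.symm T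
      rw [← this]
      unfold l1
      refine Finset.sum_congr rfl fun i _ => Finset.sum_congr rfl fun j _ => ?_
      rw [conj_apply σ P T hP]
end

section
/- (Cone condition.) Let X, ε be n×p real matrices (n ≥ 1) and G₀ a p×p real matrix with X = X G₀ + ε, and let S ⊆ {1,…,p}² contain the support of G₀ (i.e. (G₀)_{ij} = 0 for (i,j) ∉ S). Let λ > 0, let 𝒢 be a set of p×p matrices containing G₀, and suppose Ĝ ∈ 𝒢 minimizes G ↦ (1/n)‖X(I − G)‖_F² + λ‖G‖₁ over 𝒢. Set Δ = Ĝ − G₀ and assume the cross-term bound (2/n)·|trace(εᵀ X Δ)| ≤ (λ/2)‖Δ‖₁. Then Δ lies in the cone: ‖Δ_{S^C}‖₁ ≤ 3‖Δ_S‖₁. -/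
open Matrix BigOperators

/-- The matrix equal to `M` on the entries indexed by `S` and zero elsewhere. -/
def restrictTo {p : ℕ} (S : Finset (Fin p × Fin p)) (M : Matrix (Fin p) (Fin p) ℝ) :
    Matrix (Fin p) (Fin p) ℝ :=
  fun i j => if (i, j) ∈ S then M i j else 0

lemma frob_sq' {n p : ℕ} (A : Matrix (Fin n) (Fin p) ℝ) :
    (frob A) ^ 2 = ∑ i, ∑ j, (A i j) ^ 2 := by
  apply Real.sq_sqrt
  exact Finset.sum_nonneg fun i _ => Finset.sum_nonneg fun j _ => sq_nonneg _

lemma frob_sq_sub' {n p : ℕ} (eps M : Matrix (Fin n) (Fin p) ℝ) :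
    (frob (eps - M)) ^ 2 = (frob eps)^2 - 2 * Matrix.trace (epsᵀ * M) + (frob M)^2 := by
  have htr : Matrix.trace (epsᵀ * M) = ∑ i, ∑ j, eps i j * M i j := by
    rw [Matrix.trace]
    simp only [Matrix.diag, Matrix.mul_apply, Matrix.transpose_apply]
    rw [Finset.sum_comm]
  rw [frob_sq', frob_sq', frob_sq', htr]
  rw [Finset.mul_sum]
  simp_rw [Finset.mul_sum]
  rw [← Finset.sum_sub_distrib, ← Finset.sum_add_distrib]
  apply Finset.sum_congr rfl; intro i _
  rw [← Finset.sum_sub_distrib, ← Finset.sum_add_distrib]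
  apply Finset.sum_congr rfl; intro j _
  simp [Matrix.sub_apply]; ring

lemma l1_add_le_l1_add' {p : ℕ} (A B C D : Matrix (Fin p) (Fin p) ℝ)
    (h : ∀ i j, |A i j| + |B i j| ≤ |C i j| + |D i j|) :
    l1 A + l1 B ≤ l1 C + l1 D := by
  unfold l1
  rw [← Finset.sum_add_distrib, ← Finset.sum_add_distrib]
  apply Finset.sum_le_sum; intro i _
  rw [← Finset.sum_add_distrib, ← Finset.sum_add_distrib]
  exact Finset.sum_le_sum fun j _ => h i j

theorem stmt_14 {n p : ℕ} (hn : 1 ≤ n) (X eps : Matrix (Fin n) (Fin p) ℝ)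
    (G₀ : Matrix (Fin p) (Fin p) ℝ) (hmodel : X = X * G₀ + eps)
    (S : Finset (Fin p × Fin p)) (hsupp : ∀ i j : Fin p, (i, j) ∉ S → G₀ i j = 0)
    (lam : ℝ) (hlam : 0 < lam)
    (𝒢 : Set (Matrix (Fin p) (Fin p) ℝ)) (hG₀ : G₀ ∈ 𝒢)
    (Ghat : Matrix (Fin p) (Fin p) ℝ) (hGhat : Ghat ∈ 𝒢)
    (hmin : ∀ G ∈ 𝒢,
      (1 / (n : ℝ)) * (frob (X * (1 - Ghat))) ^ 2 + lam * l1 Ghat ≤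
        (1 / (n : ℝ)) * (frob (X * (1 - G))) ^ 2 + lam * l1 G)
    (hcross : (2 / (n : ℝ)) * |Matrix.trace (epsᵀ * (X * (Ghat - G₀)))| ≤
      (lam / 2) * l1 (Ghat - G₀)) :
    l1 ((Ghat - G₀) - restrictTo S (Ghat - G₀)) ≤ 3 * l1 (restrictTo S (Ghat - G₀)) := by
  set Δ := Ghat - G₀ with hΔ
  set M := X * Δ with hM
  set ΔS := restrictTo S Δ with hΔS
  have hnpos : (0 : ℝ) < n := by exact_mod_cast hn
  -- residual identities
  have hG0res : X * (1 - G₀) = eps := by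
    rw [Matrix.mul_sub, Matrix.mul_one]
    nth_rewrite 1 [hmodel]; abel
  have hGhres : X * (1 - Ghat) = eps - M := by
    rw [Matrix.mul_sub, Matrix.mul_one, hM, hΔ, Matrix.mul_sub]
    nth_rewrite 1 [hmodel]; abel
  -- basic inequality
  have hbasic := hmin G₀ hG₀
  rw [hG0res, hGhres, frob_sq_sub'] at hbasic
  set T := Matrix.trace (epsᵀ * M) with hT
  -- l1 splits
  have hsplit : l1 Δ = l1 ΔS + l1 (Δ - ΔS) := by
    unfold l1
    rw [← Finset.sum_add_distrib]
    apply Finset.sum_congr rfl; intro i _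
    rw [← Finset.sum_add_distrib]
    apply Finset.sum_congr rfl; intro j _
    by_cases h : (i, j) ∈ S <;>
      simp [hΔS, restrictTo, Matrix.sub_apply, h]
  -- decomposability inequality
  have hdec : l1 G₀ + l1 (Δ - ΔS) ≤ l1 Ghat + l1 ΔS := by
    apply l1_add_le_l1_add'
    intro i j
    by_cases h : (i, j) ∈ S
    · simp only [hΔS, restrictTo, Matrix.sub_apply, h, if_true, sub_self, abs_zero, hΔ]
      nlinarith [abs_sub_abs_le_abs_sub (G₀ i j) (Ghat i j), abs_sub_comm (Ghat i j) (G₀ i j),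
        abs_nonneg ((Ghat i j) - (G₀ i j))]
    · have h0 : G₀ i j = 0 := hsupp i j h
      simp [hΔS, restrictTo, Matrix.sub_apply, h, h0, hΔ]
  have hfM : 0 ≤ (frob M) ^ 2 := sq_nonneg _
  have habsT : (2 / (n : ℝ)) * T ≤ (lam / 2) * l1 Δ := by
    calc (2 / (n : ℝ)) * T ≤ (2 / (n : ℝ)) * |T| := by
          have h2n : (0:ℝ) ≤ 2 / (n:ℝ) := by positivity
          exact mul_le_mul_of_nonneg_left (le_abs_self T) h2n
      _ ≤ (lam / 2) * l1 Δ := hcross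
  have ha : 0 ≤ l1 ΔS := Finset.sum_nonneg fun i _ =>
    Finset.sum_nonneg fun j _ => abs_nonneg _
  -- combine
  have key : 0 ≤ (lam / 2) * l1 Δ + lam * (l1 G₀ - l1 Ghat) := by
    have h1 : (1 / (n : ℝ)) * ((frob M)^2) ≤ (2 / (n:ℝ)) * T + lam * (l1 G₀ - l1 Ghat) := by
      have e : (2:ℝ)/(n:ℝ) = 2 * (1/(n:ℝ)) := by ring
      rw [e]
      nlinarith [hbasic]
    have h2 : 0 ≤ (1 / (n : ℝ)) * ((frob M)^2) := by positivity
    linarith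
  rw [hsplit] at key
  have hd2 : lam * (l1 G₀ - l1 Ghat) ≤ lam * (l1 ΔS - l1 (Δ - ΔS)) := by
    apply mul_le_mul_of_nonneg_left _ hlam.le
    linarith
  have hfin : lam * l1 (Δ - ΔS) ≤ lam * (3 * l1 ΔS) := by nlinarith [key, hd2]
  exact (mul_le_mul_iff_right₀ hlam).mp hfin
end

section
/- (Minimal eigenvalue bound.) Let p ≥ 1, let G be a p×p real matrix compatible with a DAG such that |G_{ij}| ≤ g_max for all i,j and G has at most s² nonzero entries for some integer s with 1 ≤ s ≤ p. Let Σ be a symmetric positive definite p×p real matrix with Σ⁻¹ = (I − G)(I − G)ᵀ. Then every eigenvalue of Σ is at least 1 / (p · max(1, g_max²) · (1 + s)); in particular the minimal eigenvalue λ_min of Σ satisfies λ_min ≥ 1 / (p · max(1, g_max²) · (1 + s)). -/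
open Matrix BigOperators

theorem stmt_17 {p : ℕ} (hp : 1 ≤ p) (G : Matrix (Fin p) (Fin p) ℝ)
    (hG : AcyclicMatrix G)
    (gmax : ℝ) (hbound : ∀ i j : Fin p, |G i j| ≤ gmax)
    (s : ℕ) (hs1 : 1 ≤ s) (hsp : s ≤ p)
    (hsparse : Set.ncard {ij : Fin p × Fin p | G ij.1 ij.2 ≠ 0} ≤ s ^ 2)
    (Cov : Matrix (Fin p) (Fin p) ℝ) (hCov : Cov.PosDef)
    (hinv : Cov⁻¹ = (1 - G) * (1 - G)ᵀ) :
    ∀ μ : ℝ, (∃ v : Fin p → ℝ, v ≠ 0 ∧ Cov.mulVec v = μ • v) →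
      1 / ((p : ℝ) * max 1 (gmax ^ 2) * (1 + (s : ℝ))) ≤ μ := by
  rintro μ ⟨v, hv, hev⟩
  set C : ℝ := (p : ℝ) * max 1 (gmax ^ 2) * (1 + (s : ℝ)) with hC
  have hg0 : 0 ≤ gmax := le_trans (abs_nonneg _) (hbound ⟨0, hp⟩ ⟨0, hp⟩)
  have hCpos : 0 < C := by
    have : (0:ℝ) < p := by positivity
    have h1 : (0:ℝ) < max 1 (gmax ^ 2) := lt_of_lt_of_le one_pos (le_max_left _ _)
    positivity
  -- μ > 0
  have hvv : 0 < v ⬝ᵥ v := by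
    obtain ⟨i, hi⟩ := Function.ne_iff.mp hv
    exact Finset.sum_pos' (fun j _ => mul_self_nonneg _)
      ⟨i, Finset.mem_univ i, mul_self_pos.mpr hi⟩
  -- dotProduct with Cov
  have hμpos : 0 < μ := by
    have h2 : 0 < star v ⬝ᵥ Cov.mulVec v := hCov.dotProduct_mulVec_pos hv
    rw [hev] at h2
    simp only [star_trivial, dotProduct_smul, smul_eq_mul] at h2
    nlinarith
  -- Cov⁻¹ v = μ⁻¹ v
  have hU : IsUnit Cov.det := hCov.det_pos.ne'.isUnit
  have hinvv : Cov⁻¹.mulVec v = μ⁻¹ • v := by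
    have h1 : Cov⁻¹.mulVec (Cov.mulVec v) = v := by
      rw [mulVec_mulVec, Matrix.nonsing_inv_mul _ hU, one_mulVec]
    rw [hev, mulVec_smul] at h1
    conv_rhs => rw [← h1]
    rw [smul_smul, inv_mul_cancel₀ hμpos.ne', one_smul]
  -- w = (1-G)ᵀ v
  set w : Fin p → ℝ := (1 - G)ᵀ.mulVec v with hw
  have hkey : μ⁻¹ * (v ⬝ᵥ v) = w ⬝ᵥ w := by
    have : v ⬝ᵥ Cov⁻¹.mulVec v = μ⁻¹ * (v ⬝ᵥ v) := by
      rw [hinvv, dotProduct_smul, smul_eq_mul]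
    rw [← this, hinv, ← mulVec_mulVec, dotProduct_mulVec, ← mulVec_transpose]
  -- diagonal of G is zero
  have hdiag : ∀ i, G i i = 0 := by
    intro i
    by_contra h
    exact hG i (Relation.TransGen.single h)
  -- Frobenius bound: ∑ij (1-G)_{ij}^2 ≤ C
  have hsum : ∑ i, ∑ j, ((1 - G)ᵀ i j) ^ 2 ≤ C := by
    have hterm : ∀ i j : Fin p, ((1 - G)ᵀ i j) ^ 2 = (if i = j then 1 else 0) + (G j i)^2 := by
      intro i j
      by_cases h : i = j
      · subst h; simp [hdiag i]
      · simp [Matrix.one_apply, h, Ne.symm h, sub_sq]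
    simp_rw [hterm, Finset.sum_add_distrib]
    have h1 : ∑ i : Fin p, ∑ j : Fin p, (if i = j then (1:ℝ) else 0) = p := by simp
    have hfin : {ij : Fin p × Fin p | G ij.1 ij.2 ≠ 0}.Finite := Set.toFinite _
    have h2 : ∑ i : Fin p, ∑ j : Fin p, (G j i)^2 ≤ (s:ℝ)^2 * gmax^2 := by
      rw [← Finset.sum_product', Finset.univ_product_univ]
      have : ∑ ij ∈ (Finset.univ : Finset (Fin p × Fin p)), (G ij.2 ij.1)^2
          = ∑ ij ∈ Finset.univ.filter (fun ij : Fin p × Fin p => G ij.2 ij.1 ≠ 0), (G ij.2 ij.1)^2 := by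
        rw [Finset.sum_filter_of_ne]
        intro x _ hx
        intro h; exact hx (by rw [h]; ring)
      rw [this]
      have hcard : (Finset.univ.filter (fun ij : Fin p × Fin p => G ij.2 ij.1 ≠ 0)).card ≤ s^2 := by
        have : (Finset.univ.filter (fun ij : Fin p × Fin p => G ij.2 ij.1 ≠ 0)).card
            = Set.ncard {ij : Fin p × Fin p | G ij.1 ij.2 ≠ 0} := by
          rw [Set.ncard_eq_toFinset_card']
          apply Finset.card_bij (fun a _ => (a.2, a.1))
          · intro a ha; simp only [Finset.mem_filter] at ha
            simp [Set.mem_toFinset, ha.2]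
          · rintro ⟨a1,a2⟩ _ ⟨b1,b2⟩ _ h; simp at h; simp [h.1, h.2]
          · rintro ⟨b1,b2⟩ hb
            refine ⟨(b2,b1), ?_, rfl⟩
            simp only [Set.mem_toFinset, Set.mem_setOf_eq] at hb
            simp [hb]
        omega
      calc ∑ ij ∈ Finset.univ.filter (fun ij : Fin p × Fin p => G ij.2 ij.1 ≠ 0), (G ij.2 ij.1)^2
          ≤ ∑ ij ∈ Finset.univ.filter (fun ij : Fin p × Fin p => G ij.2 ij.1 ≠ 0), gmax^2 := by
            apply Finset.sum_le_sum
            intro i _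
            calc (G i.2 i.1)^2 = |G i.2 i.1|^2 := (sq_abs _).symm
              _ ≤ gmax^2 := pow_le_pow_left₀ (abs_nonneg _) (hbound i.2 i.1) 2
        _ = (Finset.univ.filter (fun ij : Fin p × Fin p => G ij.2 ij.1 ≠ 0)).card * gmax^2 := by
            rw [Finset.sum_const, nsmul_eq_mul]
        _ ≤ (s:ℝ)^2 * gmax^2 := by
            apply mul_le_mul_of_nonneg_right _ (sq_nonneg _)
            exact_mod_cast hcard
    rw [h1]
    calc (p:ℝ) + ∑ i : Fin p, ∑ j : Fin p, (G j i)^2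
        ≤ (p:ℝ) + (s:ℝ)^2 * gmax^2 := by linarith
      _ ≤ (p:ℝ) * max 1 (gmax^2) + (p:ℝ) * (s:ℝ) * max 1 (gmax^2) := by
          have h3 : (p:ℝ) ≤ (p:ℝ) * max 1 (gmax^2) :=
            le_mul_of_one_le_right (by positivity) (le_max_left _ _)
          have h4 : (s:ℝ)^2 * gmax^2 ≤ (p:ℝ) * (s:ℝ) * max 1 (gmax^2) := by
            have hsa : (s:ℝ)^2 ≤ (p:ℝ)*(s:ℝ) := by
              have : (s:ℝ) ≤ (p:ℝ) := by exact_mod_cast hsp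
              nlinarith [Nat.cast_nonneg (α := ℝ) s]
            exact mul_le_mul hsa (le_max_right _ _) (sq_nonneg _) (by positivity)
          linarith
      _ = C := by rw [hC]; ring
  -- Cauchy-Schwarz: w ⬝ᵥ w ≤ (∑ij A^2)(v⬝ᵥv)
  have hcs : w ⬝ᵥ w ≤ (∑ i, ∑ j, ((1 - G)ᵀ i j) ^ 2) * (v ⬝ᵥ v) := by
    unfold dotProduct
    rw [Finset.sum_mul]
    apply Finset.sum_le_sum
    intro i _
    have : w i * w i = (∑ j, (1 - G)ᵀ i j * v j)^2 := by
      rw [hw]; simp [Matrix.mulVec, dotProduct]; ring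
    rw [this]
    calc (∑ j, (1 - G)ᵀ i j * v j)^2
        ≤ (∑ j, ((1 - G)ᵀ i j)^2) * ∑ j, (v j)^2 :=
          Finset.sum_mul_sq_le_sq_mul_sq _ _ _
      _ = (∑ j, ((1 - G)ᵀ i j)^2) * ∑ j, v j * v j := by simp [sq]
  have hfinal : μ⁻¹ ≤ C := by
    have h5 : μ⁻¹ * (v ⬝ᵥ v) ≤ C * (v ⬝ᵥ v) := by
      rw [hkey]
      exact hcs.trans (mul_le_mul_of_nonneg_right hsum hvv.le)
    exact le_of_mul_le_mul_right h5 hvv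
  calc 1 / C ≤ 1 / μ⁻¹ := one_div_le_one_div_of_le (inv_pos.mpr hμpos) hfinal
    _ = μ := by rw [one_div, inv_inv]
end
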